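/- (Rayleigh and double-Rayleigh MGF) Let γ̄ > 0, 0 < α < 1 and s < 0. Then ∫₀^∞ e^{-x}/(1 - s γ̄ (1 - α(1 - x))) dx = -( e^{(s γ̄ (1-α) - 1)/(s γ̄ α)} / (s γ̄ α) ) E₁( (s (1-α) γ̄ - 1)/(s γ̄ α) ). -/
import Mathlib


open MeasureTheory Real

/-- Exponential integral `E₁(x) = ∫ₓ^∞ t⁻¹ e^{-t} dt`. -/
noncomputable def expInt (x : ℝ) : ℝ :=
  ∫ t in Set.Ioi x, Real.exp (-t) / t

/-- Shift of a set integral over `Ioi`. -/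
lemma integral_Ioi_shift (g : ℝ → ℝ) (c : ℝ) :
    ∫ x in Set.Ioi (0 : ℝ), g (x + c) = ∫ x in Set.Ioi c, g x := by
  rw [← integral_indicator measurableSet_Ioi, ← integral_indicator measurableSet_Ioi,
    ← integral_add_right_eq_self (Set.indicator (Set.Ioi c) g) c]
  congr 1
  ext x
  simp only [Set.indicator_apply, Set.mem_Ioi, lt_add_iff_pos_left]

/-- **Rayleigh and double-Rayleigh (RDR) MGF.** For `γ̄ > 0`, `0 < α < 1` and `s < 0`,
`∫₀^∞ e^{-x}/(1 - sγ̄(1-α(1-x))) dx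
  = -( e^{(sγ̄(1-α)-1)/(sγ̄α)} / (sγ̄α) ) E₁((s(1-α)γ̄-1)/(sγ̄α))`. -/
theorem rdr_mgf (γbar α s : ℝ) (hγbar : 0 < γbar) (hα0 : 0 < α) (hα1 : α < 1)
    (hs : s < 0) :
    ∫ x in Set.Ioi (0 : ℝ), Real.exp (-x) / (1 - s * γbar * (1 - α * (1 - x)))
      = -(Real.exp ((s * γbar * (1 - α) - 1) / (s * γbar * α)) / (s * γbar * α)) *
          expInt ((s * (1 - α) * γbar - 1) / (s * γbar * α)) := by
  set a : ℝ := 1 - s * γbar * (1 - α) with ha_def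
  set b : ℝ := -(s * γbar * α) with hb_def
  have hb : 0 < b := by
    have : s * γbar * α < 0 := by
      have := mul_neg_of_neg_of_pos hs hγbar
      exact mul_neg_of_neg_of_pos this hα0
    linarith
  have hb' : b ≠ 0 := ne_of_gt hb
  have hsga : s * γbar * α = -b := by simp [hb_def]
  have harg1 : (s * γbar * (1 - α) - 1) / (s * γbar * α) = a / b := by
    rw [hsga]
    have : s * γbar * (1 - α) - 1 = -a := by simp [ha_def]
    rw [this, neg_div_neg_eq]
  have harg2 : (s * (1 - α) * γbar - 1) / (s * γbar * α) = a / b := by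
    rw [hsga]
    have : s * (1 - α) * γbar - 1 = -a := by simp [ha_def]; ring
    rw [this, neg_div_neg_eq]
  rw [harg1, harg2, hsga]
  have hLHS : ∀ x : ℝ, Real.exp (-x) / (1 - s * γbar * (1 - α * (1 - x)))
      = Real.exp (a / b) / b * (Real.exp (-(x + a / b)) / (x + a / b)) := by
    intro x
    have hba : b * (a / b) = a := by field_simp
    have hden : 1 - s * γbar * (1 - α * (1 - x)) = b * (x + a / b) := by
      rw [mul_add, hba, ha_def, hb_def]; ring
    have hexp : Real.exp (-x) = Real.exp (a / b) * Real.exp (-(x + a / b)) := by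
      rw [← Real.exp_add]; ring_nf
    rw [hden, hexp, mul_div_mul_comm]
  calc ∫ x in Set.Ioi (0 : ℝ), Real.exp (-x) / (1 - s * γbar * (1 - α * (1 - x)))
      = ∫ x in Set.Ioi (0 : ℝ),
          Real.exp (a / b) / b * (Real.exp (-(x + a / b)) / (x + a / b)) := by
        exact setIntegral_congr_fun measurableSet_Ioi fun x _ => hLHS x
    _ = Real.exp (a / b) / b *
        ∫ x in Set.Ioi (0 : ℝ), Real.exp (-(x + a / b)) / (x + a / b) := by
        rw [integral_const_mul]
    _ = Real.exp (a / b) / b * ∫ t in Set.Ioi (a / b), Real.exp (-t) / t := by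
        rw [integral_Ioi_shift (fun t => Real.exp (-t) / t) (a / b)]
    _ = -(Real.exp (a / b) / -b) * expInt (a / b) := by
        rw [expInt]; ring
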